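/- (Theorem 3, low-dimensional support; doubling-dimension form.) There is a universal constant C > 0 such that the following holds. Let (𝒟,h) be a separable binary classification task on ℝ^d with supp(𝒟) bounded, let f be a measurable classifier, let ε > 0, β > 1, and suppose the εβ-doubling dimension of supp(𝒟) (with the ℓ₂ metric inherited from ℝ^d) is at most d'. Let g_Π be the smoothed classifier obtained from the ball carving partition Π of supp(𝒟) with parameter εβ. Then 𝔼_{R,σ}[AR(g_Π, ε)] ≤ 2·S(εβ) + 2·R(f) + C·(d'+1)/β; moreover, if AR(ε) > 0 then 𝔼_{R,σ}[AR(g_Π, ε)] ≤ (2·S(εβ)/S(2ε))·AR(ε) + 2·R(f) + C·(d'+1)/β. -/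

import Mathlib

open MeasureTheory Metric Set
open scoped ENNReal NNReal

noncomputable section

/-- The Euclidean space `ℝ^d` with the `ℓ₂` metric. -/
abbrev Euc (d : ℕ) := EuclideanSpace ℝ (Fin d)

/-- A (binary) classifier: a measurable function with values in `{-1, 1}`. -/
def IsClassifier {d : ℕ} (f : Euc d → ℝ) : Prop :=
  Measurable f ∧ ∀ x, f x = 1 ∨ f x = -1

/-- The (standard) risk `R(f) = ℙ_{X ∼ 𝒟}(f(X) ≠ h(X))` of a classifier `f`
with respect to the data distribution `𝒟` and the ground truth `h`. -/
def risk {d : ℕ} (𝒟 : Measure (Euc d)) (h f : Euc d → ℝ) : ℝ≥0∞ :=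
  𝒟 {x | f x ≠ h x}

/-- The adversarial risk
`AR(f,ε) = ℙ_{X ∼ 𝒟}(∃ η, ‖η‖₂ < ε ∧ f(X+η) ≠ h(X))`. -/
def advRisk {d : ℕ} (𝒟 : Measure (Euc d)) (h f : Euc d → ℝ) (ε : ℝ) : ℝ≥0∞ :=
  𝒟 {x | ∃ η : Euc d, ‖η‖ < ε ∧ f (x + η) ≠ h x}

/-- `AR(ε)`: the infimum of the adversarial risk over all measurable classifiers. -/
def optAdvRisk {d : ℕ} (𝒟 : Measure (Euc d)) (h : Euc d → ℝ) (ε : ℝ) : ℝ≥0∞ :=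
  ⨅ (f : Euc d → ℝ) (_ : IsClassifier f), advRisk 𝒟 h f ε

/-- The `ℓ₂` distance between two sets, as an extended nonnegative real
(`∞` if one of the sets is empty). -/
def setEDist {d : ℕ} (A B : Set (Euc d)) : ℝ≥0∞ :=
  ⨅ a ∈ A, ⨅ b ∈ B, edist a b

/-- The separation function `S(ε)`: the infimum, over measurable sets `E` whose
removal separates the two classes `M₋ = h⁻¹({-1})` and `M₊ = h⁻¹({1})` by
distance at least `ε`, of the probability mass of `E`. -/
def sep {d : ℕ} (𝒟 : Measure (Euc d)) (h : Euc d → ℝ) (ε : ℝ) : ℝ≥0∞ :=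
  ⨅ (E : Set (Euc d)) (_ : MeasurableSet E)
    (_ : ENNReal.ofReal ε ≤ setEDist (h ⁻¹' {-1} \ E) (h ⁻¹' {1} \ E)), 𝒟 E

/-- The support of a Borel measure on `ℝ^d`: the set of points all of whose
neighborhoods have positive mass. -/
def msupport {d : ℕ} (𝒟 : Measure (Euc d)) : Set (Euc d) :=
  {x | ∀ r : ℝ, 0 < r → 0 < 𝒟 (ball x r)}

/-- `sgn t = 1` if `t ≥ 0` and `sgn t = -1` otherwise. -/
def sgn (t : ℝ) : ℝ := if 0 ≤ t then 1 else -1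

/-- `sgn (𝔼_{Z ∼ 𝒟}[f(Z) ∣ Z ∈ A])`: the sign of the conditional expectation of
`f` under `𝒟` given the block `A`. -/
def smoothVal {d : ℕ} (𝒟 : Measure (Euc d)) (f : Euc d → ℝ) (A : Set (Euc d)) : ℝ :=
  sgn ((∫ z in A, f z ∂𝒟) / (𝒟 A).toReal)

/-- The block `Π̂(uᵢ) = B_R(uᵢ) \\ ⋃_{j : σ(j) < σ(i)} B_R(uⱼ)` of the ball
carving partition built from the net `u`, radius `R` and order `σ`. -/
def carvBlock {d n : ℕ} (u : Fin n → Euc d) (R : ℝ) (σ : Equiv.Perm (Fin n))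
    (i : Fin n) : Set (Euc d) :=
  ball (u i) R \ ⋃ j ∈ {j | σ j < σ i}, ball (u j) R

/-- The uniform probability measure on the interval `Ioc a b`. -/
def unifIoc (a b : ℝ) : Measure ℝ :=
  (volume (Set.Ioc a b))⁻¹ • volume.restrict (Set.Ioc a b)

instance (n : ℕ) : MeasurableSpace (Equiv.Perm (Fin n)) := ⊤

/-- The uniform probability measure on permutations of `Fin n` (a uniformly
random linear order of the net). -/
def unifPerm (n : ℕ) : Measure (Equiv.Perm (Fin n)) :=
  (Measure.count (Set.univ : Set (Equiv.Perm (Fin n))))⁻¹ • Measure.count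

/-- The joint distribution of the randomness `(R, σ)` of the ball carving
partition with parameter `ε`: `R` uniform on `(ε/4, ε/2]` and `σ` a uniformly
random order, independent. -/
def carvMeasure (ε : ℝ) (n : ℕ) : Measure (ℝ × Equiv.Perm (Fin n)) :=
  (unifIoc (ε / 4) (ε / 2)).prod (unifPerm n)

/-- The doubling constant of a metric space at scale `ε`: the smallest `λ : ℕ`
such that every ball of radius at most `ε` can be covered by `λ` balls of half
the radius. -/
def doublingConstant (M : Type*) [PseudoMetricSpace M] (ε : ℝ) : ℕ :=
  sInf {l : ℕ | ∀ (x : M) (r : ℝ), 0 < r → r ≤ ε →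
    ∃ T : Finset M, T.card ≤ l ∧ ball x r ⊆ ⋃ y ∈ T, ball y (r / 2)}

/-- The `ε`-doubling dimension `dd(M,ε) = log₂ λ` of a metric space. -/
def ddim (M : Type*) [PseudoMetricSpace M] (ε : ℝ) : ℝ :=
  Real.logb 2 (doublingConstant M ε)

section Batch1
variable {d : ℕ}

lemma isClosed_msupport (𝒟 : Measure (Euc d)) : IsClosed (msupport 𝒟) := by
  rw [← isOpen_compl_iff, Metric.isOpen_iff]
  intro x hx
  simp only [msupport, mem_compl_iff, mem_setOf_eq, not_forall] at hx
  obtain ⟨r, hr, hz⟩ := hx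
  refine ⟨r / 2, by positivity, fun y hy => ?_⟩
  simp only [msupport, mem_compl_iff, mem_setOf_eq, not_forall]
  refine ⟨r / 2, by positivity, fun hpos => hz ?_⟩
  exact hpos.trans_le (measure_mono (fun z hz' => by
    have : dist z x < r := by
      have h1 : dist z y < r / 2 := hz'
      have h2 : dist y x < r / 2 := hy
      calc dist z x ≤ dist z y + dist y x := dist_triangle _ _ _
        _ < r / 2 + r / 2 := by linarith
        _ = r := by ring
    exact this))

lemma measure_compl_msupport (𝒟 : Measure (Euc d)) : 𝒟 (msupport 𝒟)ᶜ = 0 := by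
  classical
  have hopen : ∀ y : ↥(msupport 𝒟)ᶜ, ∃ r : ℝ, 0 < r ∧ 𝒟 (ball (y : Euc d) r) = 0 := by
    rintro ⟨y, hy⟩
    simp only [msupport, mem_compl_iff, mem_setOf_eq, not_forall] at hy
    obtain ⟨r, hr, hz⟩ := hy
    exact ⟨r, hr, by simpa using (not_lt.mp hz).antisymm (zero_le)⟩
  choose r hr h0 using hopen
  obtain ⟨t, htc, hteq⟩ := TopologicalSpace.isOpen_iUnion_countable
    (fun y : ↥(msupport 𝒟)ᶜ => ball (y : Euc d) (r y)) (fun y => isOpen_ball)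
  have hsub : (msupport 𝒟)ᶜ ⊆ ⋃ y ∈ t, ball (y : Euc d) (r y) := by
    rw [hteq]
    intro y hy
    exact mem_iUnion.mpr ⟨⟨y, hy⟩, mem_ball_self (hr ⟨y, hy⟩)⟩
  refine le_antisymm ?_ (zero_le)
  exact le_trans (measure_mono hsub)
    (le_of_eq ((measure_biUnion_null_iff htc).mpr (fun y _ => h0 y)))

lemma unifIoc_prob {a b : ℝ} (h : a < b) : IsProbabilityMeasure (unifIoc a b) := by
  constructor
  rw [unifIoc, Measure.smul_apply, Measure.restrict_apply MeasurableSet.univ,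
    Set.univ_inter, Real.volume_Ioc, smul_eq_mul]
  exact ENNReal.inv_mul_cancel (by simp [h, sub_pos.mpr h] ) ENNReal.ofReal_ne_top

lemma unifPerm_prob (n : ℕ) : IsProbabilityMeasure (unifPerm n) := by
  constructor
  rw [unifPerm, Measure.smul_apply, smul_eq_mul]
  refine ENNReal.inv_mul_cancel ?_ ?_
  · rw [Measure.count_apply_finite _ (Set.finite_univ)]
    simp [Nat.card_coe_set_eq]
  · rw [Measure.count_apply_finite _ (Set.finite_univ)]
    exact ENNReal.natCast_ne_top _

end Batch1
section Batch2
variable {d : ℕ}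

lemma sep_le_measureSet (𝒟 : Measure (Euc d)) (h : Euc d → ℝ) (ε : ℝ)
    (E : Set (Euc d)) (hE : MeasurableSet E)
    (hsep : ENNReal.ofReal ε ≤ setEDist (h ⁻¹' {-1} \ E) (h ⁻¹' {1} \ E)) :
    sep 𝒟 h ε ≤ 𝒟 E :=
  iInf_le_of_le E (iInf_le_of_le hE (iInf_le _ hsep))

lemma sep_le_univ (𝒟 : Measure (Euc d)) (h : Euc d → ℝ) (ε : ℝ) :
    sep 𝒟 h ε ≤ 𝒟 Set.univ := by
  refine sep_le_measureSet 𝒟 h ε Set.univ MeasurableSet.univ ?_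
  refine le_iInf fun a => le_iInf fun ha => ?_
  exact absurd (Set.mem_univ a) ha.2

lemma sep_le_advRisk (𝒟 : Measure (Euc d)) (h f' : Euc d → ℝ)
    (hf' : IsClassifier f') (hh : IsClassifier h) {ε : ℝ} (hε : 0 < ε) :
    sep 𝒟 h (2 * ε) ≤ advRisk 𝒟 h f' ε := by
  rw [advRisk, measure_eq_iInf]
  refine le_iInf fun t => le_iInf fun hst => le_iInf fun ht => sep_le_measureSet _ _ _ _ ht ?_
  refine le_iInf fun a => le_iInf fun ha => le_iInf fun b => le_iInf fun hb => ?_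
  by_contra hlt
  rw [not_le, edist_dist] at hlt
  have hdist : dist a b < 2 * ε := by
    have := (ENNReal.ofReal_lt_ofReal_iff (by linarith)).mp hlt
    exact this
  have hanot : ¬ (∃ η : Euc d, ‖η‖ < ε ∧ f' (a + η) ≠ h a) := fun hc => ha.2 (hst hc)
  have hbnot : ¬ (∃ η : Euc d, ‖η‖ < ε ∧ f' (b + η) ≠ h b) := fun hc => hb.2 (hst hc)
  push_neg at hanot hbnot
  have hha : h a = -1 := ha.1
  have hhb : h b = 1 := hb.1
  have hnorm : ‖(2⁻¹ : ℝ) • (b - a)‖ < ε := by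
    rw [norm_smul]
    have : ‖b - a‖ = dist a b := by rw [dist_eq_norm, norm_sub_rev]
    rw [this]
    simp only [norm_inv, Real.norm_ofNat]
    nlinarith [dist_nonneg (x := a) (y := b)]
  have hnorm' : ‖(2⁻¹ : ℝ) • (a - b)‖ < ε := by
    rw [show (2⁻¹ : ℝ) • (a - b) = -((2⁻¹ : ℝ) • (b - a)) by module, norm_neg]
    exact hnorm
  have hkey : a + (2⁻¹ : ℝ) • (b - a) = b + (2⁻¹ : ℝ) • (a - b) := by module
  have h1 : f' (a + (2⁻¹ : ℝ) • (b - a)) = -1 := by rw [hanot _ hnorm, hha]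
  have h2 : f' (a + (2⁻¹ : ℝ) • (b - a)) = 1 := by rw [hkey, hbnot _ hnorm', hhb]
  rw [h1] at h2
  norm_num at h2

lemma le_div_mul_of_le (a s A : ℝ≥0∞) (h1 : s ≤ A) (hA : 0 < A) (hs1 : s ≠ ⊤) :
    a ≤ a / s * A := by
  rcases eq_or_ne a 0 with rfl | ha
  · simp
  rcases eq_or_ne s 0 with rfl | hs
  · rw [ENNReal.div_zero ha]
    exact le_of_le_of_eq le_top (ENNReal.top_mul hA.ne').symm
  · calc a = a / s * s := (ENNReal.div_mul_cancel hs hs1).symm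
      _ ≤ a / s * A := mul_le_mul_right h1 _

end Batch2
section Batch3

open Finset in
lemma perm_min_card {n : ℕ} (J : Finset (Fin n)) {j : Fin n} (hj : j ∈ J) :
    J.card * (Finset.univ.filter
        (fun σ : Equiv.Perm (Fin n) => ∀ k ∈ J, k ≠ j → σ j < σ k)).card
      = Fintype.card (Equiv.Perm (Fin n)) := by
  classical
  set S : Fin n → Finset (Equiv.Perm (Fin n)) :=
    fun i => Finset.univ.filter (fun σ => ∀ k ∈ J, k ≠ i → σ i < σ k) with hS
  have hmem : ∀ (i : Fin n) (σ : Equiv.Perm (Fin n)),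
      σ ∈ S i ↔ ∀ k ∈ J, k ≠ i → σ i < σ k := by
    intro i σ; simp [hS]
  have hswap : ∀ i ∈ J, ∀ i' ∈ J, ∀ σ, σ ∈ S i → σ * Equiv.swap i i' ∈ S i' := by
    intro i hi i' hi' σ hσ
    rcases eq_or_ne i i' with rfl | hne
    · simpa [Equiv.swap_self, Equiv.Perm.mul_refl] using hσ
    rw [hmem] at hσ ⊢
    intro k hk hki'
    rcases eq_or_ne k i with rfl | hki
    · simpa [Equiv.Perm.mul_apply] using hσ i' hi' (Ne.symm hne)
    · have : (σ * Equiv.swap i i') k = σ k := by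
        simp [Equiv.Perm.mul_apply, Equiv.swap_apply_of_ne_of_ne hki hki']
      rw [this]
      simpa [Equiv.Perm.mul_apply] using hσ k hk hki
  have hcard : ∀ i ∈ J, (S i).card = (S j).card := by
    intro i hi
    refine Finset.card_bij' (fun σ _ => σ * Equiv.swap i j)
      (fun σ _ => σ * Equiv.swap j i) ?_ ?_ ?_ ?_
    · intro σ hσ; exact hswap i hi j hj σ hσ
    · intro σ hσ; exact hswap j hj i hi σ hσ
    · intro σ _; simp [mul_assoc, Equiv.swap_comm i j]
    · intro σ _; simp [mul_assoc, Equiv.swap_comm j i]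
  have hdisj : ∀ i ∈ J, ∀ i' ∈ J, i ≠ i' → Disjoint (S i) (S i') := by
    intro i hi i' hi' hne
    rw [Finset.disjoint_left]
    intro σ h1 h2
    rw [hmem] at h1 h2
    exact lt_asymm (h1 i' hi' (Ne.symm hne)) (h2 i hi hne)
  have hcover : J.biUnion S = Finset.univ := by
    refine Finset.eq_univ_of_forall fun σ => ?_
    obtain ⟨i, hi, hmin⟩ := Finset.exists_min_image J σ ⟨j, hj⟩
    refine Finset.mem_biUnion.mpr ⟨i, hi, (hmem i σ).mpr fun k hk hki => ?_⟩
    exact lt_of_le_of_ne (hmin k hk) (fun he => hki (σ.injective he).symm)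
  calc J.card * (S j).card = ∑ i ∈ J, (S j).card := by rw [Finset.sum_const, smul_eq_mul]
    _ = ∑ i ∈ J, (S i).card := Finset.sum_congr rfl (fun i hi => (hcard i hi).symm)
    _ = (J.biUnion S).card := (Finset.card_biUnion hdisj).symm
    _ = Fintype.card (Equiv.Perm (Fin n)) := by rw [hcover, Finset.card_univ]

lemma count_set_eq_card {α : Type*} [MeasurableSpace α] [Fintype α]
    (hms : ∀ s : Set α, MeasurableSet s) (s : Finset α) :
    Measure.count (s : Set α) = s.card := by
  rw [Measure.count_apply_finite' (Set.finite_coe_iff.mp (by infer_instance)) (hms _)]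
  simp

lemma unifPerm_min_le {n : ℕ} (J : Finset (Fin n)) {j : Fin n} (hj : j ∈ J)
    {k : ℕ} (hk : k ≤ J.card) :
    unifPerm n {σ | ∀ k' ∈ J, k' ≠ j → σ j < σ k'} ≤ (k : ℝ≥0∞)⁻¹ := by
  classical
  have hms : ∀ s : Set (Equiv.Perm (Fin n)), MeasurableSet s := fun s => trivial
  set S : Finset (Equiv.Perm (Fin n)) :=
    Finset.univ.filter (fun σ => ∀ k' ∈ J, k' ≠ j → σ j < σ k') with hSdef
  have hset : {σ : Equiv.Perm (Fin n) | ∀ k' ∈ J, k' ≠ j → σ j < σ k'} = (S : Set _) := by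
    ext σ; simp [hSdef]
  have hN : J.card * S.card = Fintype.card (Equiv.Perm (Fin n)) := perm_min_card J hj
  rw [unifPerm, Measure.smul_apply, smul_eq_mul, hset, count_set_eq_card hms]
  have huniv : Measure.count (Set.univ : Set (Equiv.Perm (Fin n)))
      = (Fintype.card (Equiv.Perm (Fin n)) : ℝ≥0∞) := by
    rw [← Finset.coe_univ, count_set_eq_card hms, Finset.card_univ]
  rw [huniv]
  rcases Nat.eq_zero_or_pos S.card with hc0 | hcpos
  · simp [hc0]
  rcases Nat.eq_zero_or_pos k with rfl | hkpos
  · simp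
  -- (N)⁻¹ * c ≤ k⁻¹ where N = J.card * c ≥ k * c
  have hcount : ((k * S.card : ℕ) : ℝ≥0∞) ≤ (Fintype.card (Equiv.Perm (Fin n)) : ℝ≥0∞) := by
    exact_mod_cast hN ▸ Nat.mul_le_mul_right _ hk
  have hc0 : (S.card : ℝ≥0∞) ≠ 0 := by exact_mod_cast hcpos.ne'
  have hk0 : (k : ℝ≥0∞) ≠ 0 := by exact_mod_cast hkpos.ne'
  calc (Fintype.card (Equiv.Perm (Fin n)) : ℝ≥0∞)⁻¹ * S.card
      ≤ ((k * S.card : ℕ) : ℝ≥0∞)⁻¹ * S.card :=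
        mul_le_mul_left (ENNReal.inv_le_inv' hcount) _
    _ = (k : ℝ≥0∞)⁻¹ := by
        push_cast
        rw [ENNReal.mul_inv (Or.inl hk0) (Or.inr hc0), mul_assoc,
          ENNReal.inv_mul_cancel hc0 (ENNReal.natCast_ne_top _), mul_one]

end Batch3
section Batch4

lemma cover_pow {M : Type*} [PseudoMetricSpace M] {Δ : ℝ} (hΔ : 0 < Δ) {l : ℕ}
    (hl : ∀ (x : M) (r : ℝ), 0 < r → r ≤ Δ →
      ∃ T : Finset M, T.card ≤ l ∧ ball x r ⊆ ⋃ y ∈ T, ball y (r / 2)) :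
    ∀ (k : ℕ) (x : M), ∃ T : Finset M, T.card ≤ l ^ k ∧
      ball x Δ ⊆ ⋃ y ∈ T, ball y (Δ / 2 ^ k) := by
  classical
  intro k
  induction k with
  | zero => intro x; exact ⟨{x}, by simp, by simp⟩
  | succ k ih =>
    intro x
    obtain ⟨T, hTc, hTs⟩ := ih x
    have hr : (0:ℝ) < Δ / 2 ^ k := by positivity
    have hrle : Δ / 2 ^ k ≤ Δ := div_le_self hΔ.le (one_le_pow₀ one_le_two)
    choose T' hT'c hT's using fun y : M => hl y (Δ / 2 ^ k) hr hrle
    refine ⟨T.biUnion T', ?_, ?_⟩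
    · calc (T.biUnion T').card ≤ ∑ y ∈ T, (T' y).card := Finset.card_biUnion_le
        _ ≤ ∑ _y ∈ T, l := Finset.sum_le_sum fun y _ => hT'c y
        _ = T.card * l := by rw [Finset.sum_const, smul_eq_mul]
        _ ≤ l ^ k * l := Nat.mul_le_mul_right _ hTc
        _ = l ^ (k+1) := (pow_succ l k).symm
    · intro z hz
      obtain ⟨y, hyT, hy⟩ := Set.mem_iUnion₂.mp (hTs hz)
      obtain ⟨w, hwT, hw⟩ := Set.mem_iUnion₂.mp (hT's y hy)
      refine Set.mem_iUnion₂.mpr ⟨w, Finset.mem_biUnion.mpr ⟨y, hyT, hwT⟩, ?_⟩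
      have he : Δ / 2 ^ k / 2 = Δ / 2 ^ (k+1) := by
        rw [div_div, ← pow_succ]
      rwa [he] at hw

lemma packing_card {M : Type*} [PseudoMetricSpace M] {Δ : ℝ} (hΔ : 0 < Δ) {l : ℕ}
    (hl : ∀ (x : M) (r : ℝ), 0 < r → r ≤ Δ →
      ∃ T : Finset M, T.card ≤ l ∧ ball x r ⊆ ⋃ y ∈ T, ball y (r / 2))
    (x : M) (s : Finset M)
    (hsep : ∀ a ∈ s, ∀ b ∈ s, a ≠ b → Δ / 4 ≤ dist a b)
    (hmem : ∀ a ∈ s, a ∈ ball x Δ) : s.card ≤ l ^ 4 := by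
  classical
  obtain ⟨T, hTc, hTs⟩ := cover_pow hΔ hl 4 x
  have hex : ∀ a : M, ∃ y, a ∈ s → y ∈ T ∧ a ∈ ball y (Δ / 2 ^ 4) := by
    intro a
    by_cases ha : a ∈ s
    · obtain ⟨y, hyT, hy⟩ := Set.mem_iUnion₂.mp (hTs (hmem a ha))
      exact ⟨y, fun _ => ⟨hyT, hy⟩⟩
    · exact ⟨x, fun h => absurd h ha⟩
  choose φ hφ using hex
  refine le_trans (Finset.card_le_card_of_injOn φ ?_ ?_) hTc
  · intro a ha
    exact (hφ a (Finset.mem_coe.mp ha)).1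
  · intro a ha b hb he
    by_contra hne
    have h1 : dist a (φ a) < Δ / 2 ^ 4 := (hφ a (Finset.mem_coe.mp ha)).2
    have h2 : dist b (φ b) < Δ / 2 ^ 4 := (hφ b (Finset.mem_coe.mp hb)).2
    have h3 : Δ / 4 ≤ dist a b := hsep a (Finset.mem_coe.mp ha) b (Finset.mem_coe.mp hb) hne
    have h4 : dist a b ≤ dist a (φ a) + dist (φ b) b := by
      calc dist a b ≤ dist a (φ a) + dist (φ a) b := dist_triangle _ _ _
        _ = dist a (φ a) + dist (φ b) b := by rw [he, dist_comm]
    rw [dist_comm] at h2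
    norm_num at h1 h2
    linarith

lemma euclidean_doubling (d : ℕ) (s : Set (Euc d)) : ∃ l : ℕ,
    ∀ (x : ↥s) (r : ℝ), 0 < r →
      ∃ T : Finset ↥s, T.card ≤ l ∧ ball x r ⊆ ⋃ y ∈ T, ball y (r / 2) := by
  classical
  obtain ⟨t, hts, htf, htcov⟩ :=
    (isCompact_closedBall (0 : Euc d) 1).finite_cover_balls (e := 1/8) (by norm_num)
  refine ⟨htf.toFinset.card, ?_⟩
  intro x r hr
  have hchoice : ∀ y : Euc d, ∃ p : ↥s,
      (∃ q : ↥s, dist (q : Euc d) ((x : Euc d) + r • y) < r/8) →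
        dist (p : Euc d) ((x : Euc d) + r • y) < r/8 := by
    intro y
    by_cases h : ∃ q : ↥s, dist (q : Euc d) ((x : Euc d) + r • y) < r/8
    · exact ⟨h.choose, fun _ => h.choose_spec⟩
    · exact ⟨x, fun hc => absurd hc h⟩
  choose φ hφ using hchoice
  refine ⟨htf.toFinset.image φ, Finset.card_image_le, ?_⟩
  intro z hz
  have hz' : dist (z : Euc d) (x : Euc d) < r := by
    rw [← Subtype.dist_eq]; exact hz
  set w : Euc d := r⁻¹ • ((z : Euc d) - x) with hw
  have hwball : w ∈ closedBall (0 : Euc d) 1 := by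
    rw [mem_closedBall, dist_zero_right, hw, norm_smul, norm_inv, Real.norm_of_nonneg hr.le]
    rw [inv_mul_le_iff₀ hr, mul_one, ← dist_eq_norm]
    exact hz'.le
  obtain ⟨y, hyt, hyb⟩ := Set.mem_iUnion₂.mp (htcov hwball)
  have hdist : dist (z : Euc d) ((x : Euc d) + r • y) < r / 8 := by
    have h1 : dist w y < 1/8 := hyb
    have he : (z : Euc d) - ((x : Euc d) + r • y) = r • (w - y) := by
      rw [hw, smul_sub, smul_inv_smul₀ hr.ne']
      abel
    rw [dist_eq_norm, he, norm_smul, Real.norm_of_nonneg hr.le, ← dist_eq_norm]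
    calc r * dist w y < r * (1/8) := (mul_lt_mul_iff_right₀ hr).mpr h1
      _ = r / 8 := by ring
  have hexq : ∃ q : ↥s, dist (q : Euc d) ((x : Euc d) + r • y) < r/8 := ⟨z, hdist⟩
  refine Set.mem_iUnion₂.mpr ⟨φ y, Finset.mem_image.mpr ⟨y, htf.mem_toFinset.mpr hyt, rfl⟩, ?_⟩
  have hp : dist ((φ y : Euc d)) ((x : Euc d) + r • y) < r/8 := hφ y hexq
  rw [mem_ball, Subtype.dist_eq]
  calc dist (z : Euc d) (φ y : Euc d) ≤ dist (z : Euc d) ((x:Euc d) + r • y)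
        + dist ((x:Euc d) + r • y) (φ y : Euc d) := dist_triangle _ _ _
    _ < r/8 + r/8 := by rw [dist_comm ((x:Euc d) + r • y)]; exact add_lt_add hdist hp
    _ ≤ r / 2 := by linarith

end Batch4
section Batch5

lemma sgn_cases (t : ℝ) : sgn t = 1 ∨ sgn t = -1 := by
  unfold sgn; split <;> simp

lemma setIntegral_classifier {d : ℕ} (𝒟 : Measure (Euc d)) [IsFiniteMeasure 𝒟]
    {f : Euc d → ℝ} (hf : IsClassifier f) (P : Set (Euc d)) (hP : MeasurableSet P) :
    ∫ z in P, f z ∂𝒟 = (𝒟 (P ∩ f ⁻¹' {1})).toReal - (𝒟 (P ∩ f ⁻¹' {-1})).toReal := by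
  have hA : MeasurableSet (f ⁻¹' {1}) := hf.1 (measurableSet_singleton _)
  have hB : MeasurableSet (f ⁻¹' {-1}) := hf.1 (measurableSet_singleton _)
  have hfi : f = fun x => (f ⁻¹' {1}).indicator (fun _ => (1:ℝ)) x
      - (f ⁻¹' {-1}).indicator (fun _ => (1:ℝ)) x := by
    funext x
    rcases hf.2 x with hx | hx <;>
      simp [Set.indicator_apply, Set.mem_preimage, hx,
        show (1:ℝ) ≠ -1 by norm_num, show (-1:ℝ) ≠ 1 by norm_num]
  have hint : ∀ (A : Set (Euc d)), MeasurableSet A →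
      Integrable (A.indicator (fun _ => (1:ℝ))) (𝒟.restrict P) := by
    intro A hA'
    refine (integrable_indicator_iff hA').mpr ?_
    refine integrableOn_const (ne_of_lt ?_)
    exact lt_of_le_of_lt (le_trans (Measure.restrict_le_self _) (measure_mono (Set.subset_univ _)))
      (measure_lt_top 𝒟 _)
  have hval : ∀ (A : Set (Euc d)), MeasurableSet A →
      ∫ z in P, A.indicator (fun _ => (1:ℝ)) z ∂𝒟 = (𝒟 (P ∩ A)).toReal := by
    intro A hA'
    rw [MeasureTheory.setIntegral_indicator hA', MeasureTheory.setIntegral_const]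
    simp
    rfl
  calc ∫ z in P, f z ∂𝒟
      = ∫ z in P, ((f ⁻¹' {1}).indicator (fun _ => (1:ℝ)) z
          - (f ⁻¹' {-1}).indicator (fun _ => (1:ℝ)) z) ∂𝒟 := by rw [← hfi]
    _ = (∫ z in P, (f ⁻¹' {1}).indicator (fun _ => (1:ℝ)) z ∂𝒟)
          - ∫ z in P, (f ⁻¹' {-1}).indicator (fun _ => (1:ℝ)) z ∂𝒟 :=
        integral_sub (hint _ hA) (hint _ hB)
    _ = (𝒟 (P ∩ f ⁻¹' {1})).toReal - (𝒟 (P ∩ f ⁻¹' {-1})).toReal := by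
        rw [hval _ hA, hval _ hB]

lemma majority_bound {d : ℕ} (𝒟 : Measure (Euc d)) [IsFiniteMeasure 𝒟]
    {f h : Euc d → ℝ} (hf : IsClassifier f) (hh : IsClassifier h)
    (P E : Set (Euc d)) (hP : MeasurableSet P)
    {c : ℝ} (hpure : ∀ x ∈ P \ E, h x = c) :
    𝒟 (P ∩ {x | h x ≠ smoothVal 𝒟 f P}) ≤
      2 * 𝒟 (P ∩ E) + 2 * 𝒟 (P ∩ {x | f x ≠ h x}) := by
  classical
  set sm := smoothVal 𝒟 f P with hsmdef
  by_cases hPE : P ⊆ E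
  · calc 𝒟 (P ∩ {x | h x ≠ sm}) ≤ 𝒟 (P ∩ E) :=
          measure_mono (fun x hx => ⟨hx.1, hPE hx.1⟩)
      _ ≤ 2 * 𝒟 (P ∩ E) := le_mul_of_one_le_left (zero_le) one_le_two
      _ ≤ _ := le_self_add
  have hcval : c = 1 ∨ c = -1 := by
    obtain ⟨x₀, hx₀P, hx₀E⟩ := Set.not_subset.mp hPE
    rw [← hpure x₀ ⟨hx₀P, hx₀E⟩]
    exact hh.2 x₀
  by_cases hsm : sm = c
  · have hsub : P ∩ {x | h x ≠ sm} ⊆ P ∩ E := by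
      rintro x ⟨hxP, hxw⟩
      refine ⟨hxP, ?_⟩
      by_contra hxE
      exact hxw (by rw [hpure x ⟨hxP, hxE⟩, hsm])
    calc 𝒟 (P ∩ {x | h x ≠ sm}) ≤ 𝒟 (P ∩ E) := measure_mono hsub
      _ ≤ 2 * 𝒟 (P ∩ E) := le_mul_of_one_le_left (zero_le) one_le_two
      _ ≤ _ := le_self_add
  · -- majority disagrees with the pure label c
    have hfin1 : 𝒟 (P ∩ f ⁻¹' {1}) ≠ ⊤ := measure_ne_top _ _
    have hfin2 : 𝒟 (P ∩ f ⁻¹' {-1}) ≠ ⊤ := measure_ne_top _ _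
    have hfinP : 𝒟 P ≠ ⊤ := measure_ne_top _ _
    have hintg := setIntegral_classifier 𝒟 hf P hP
    have hsplit : 𝒟 P = 𝒟 (P ∩ f ⁻¹' {1}) + 𝒟 (P ∩ f ⁻¹' {-1}) := by
      rw [← measure_union ?hd (hP.inter (hf.1 (measurableSet_singleton _)))]
      · congr 1
        ext x
        rcases hf.2 x with hx | hx <;>
          simp [Set.mem_preimage, hx] <;> norm_num
      · case hd =>
        rw [Set.disjoint_left]
        rintro x ⟨_, hx1⟩ ⟨_, hx2⟩
        simp only [Set.mem_preimage, Set.mem_singleton_iff] at hx1 hx2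
        rw [hx1] at hx2; norm_num at hx2
    set t1 := (𝒟 (P ∩ f ⁻¹' {1})).toReal with ht1
    set t2 := (𝒟 (P ∩ f ⁻¹' {-1})).toReal with ht2
    have htP : (𝒟 P).toReal = t1 + t2 := by
      rw [hsplit, ENNReal.toReal_add hfin1 hfin2]
    -- the key claim
    have key : 𝒟 P ≤ 2 * 𝒟 (P ∩ {x | f x ≠ c}) := by
      have hq := sgn_cases ((∫ z in P, f z ∂𝒟) / (𝒟 P).toReal)
      have hsmq : sm = sgn ((∫ z in P, f z ∂𝒟) / (𝒟 P).toReal) := rfl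
      rcases hcval with hc1 | hc1
      · -- c = 1, so sm = -1 and the f-average is negative
        have hsm' : sgn ((∫ z in P, f z ∂𝒟) / (𝒟 P).toReal) = -1 := by
          rcases hq with hq | hq
          · exact absurd (hsmq.trans hq) (by rw [hc1] at hsm; exact hsm)
          · exact hq
        have hqneg : (∫ z in P, f z ∂𝒟) / (𝒟 P).toReal < 0 := by
          by_contra hge
          rw [not_lt] at hge
          rw [sgn, if_pos hge] at hsm'
          norm_num at hsm'
        have hnum : t1 - t2 < 0 := by
          rcases div_neg_iff.mp hqneg with ⟨_, hd⟩ | ⟨hn, _⟩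
          · exact absurd hd (not_lt.mpr ENNReal.toReal_nonneg)
          · rw [hintg] at hn; exact hn
        have hseteq : P ∩ {x | f x ≠ c} = P ∩ f ⁻¹' {-1} := by
          ext x
          rcases hf.2 x with hx | hx <;> simp [hx, hc1] <;> norm_num
        rw [hseteq]
        rw [← ENNReal.toReal_le_toReal hfinP (ENNReal.mul_ne_top (by norm_num) hfin2),
          ENNReal.toReal_mul, htP]
        norm_num
        linarith
      · -- c = -1, so sm = 1 and the f-average is nonnegative
        have hsm' : sgn ((∫ z in P, f z ∂𝒟) / (𝒟 P).toReal) = 1 := by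
          rcases hq with hq | hq
          · exact hq
          · exact absurd (hsmq.trans hq) (by rw [hc1] at hsm; exact hsm)
        have hqpos : 0 ≤ (∫ z in P, f z ∂𝒟) / (𝒟 P).toReal := by
          by_contra hge
          rw [not_le] at hge
          rw [sgn, if_neg (not_le.mpr hge)] at hsm'
          norm_num at hsm'
        have hseteq : P ∩ {x | f x ≠ c} = P ∩ f ⁻¹' {1} := by
          ext x
          rcases hf.2 x with hx | hx <;> simp [hx, hc1] <;> norm_num
        rw [hseteq]
        rcases eq_or_lt_of_le (ENNReal.toReal_nonneg (a := 𝒟 P)) with hdz | hdp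
        · have hz : 𝒟 P = 0 :=
            ((ENNReal.toReal_eq_zero_iff _).mp hdz.symm).resolve_right hfinP
          rw [hz]; exact zero_le
        · have hnum : 0 ≤ t1 - t2 := by
            have h1 : (∫ z in P, f z ∂𝒟) = ((∫ z in P, f z ∂𝒟) / (𝒟 P).toReal) * (𝒟 P).toReal :=
              (div_mul_cancel₀ _ (ne_of_gt hdp)).symm
            have h2 : 0 ≤ (∫ z in P, f z ∂𝒟) := h1 ▸ mul_nonneg hqpos ENNReal.toReal_nonneg
            rw [hintg] at h2; exact h2
          rw [← ENNReal.toReal_le_toReal hfinP (ENNReal.mul_ne_top (by norm_num) hfin1),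
            ENNReal.toReal_mul, htP]
          norm_num
          linarith
    -- combine
    have hsplit2 : 𝒟 (P ∩ {x | f x ≠ c}) ≤ 𝒟 (P ∩ E) + 𝒟 (P ∩ {x | f x ≠ h x}) := by
      refine le_trans (measure_mono ?_) (measure_union_le _ _)
      rintro x ⟨hxP, hxf⟩
      by_cases hxE : x ∈ E
      · exact Or.inl ⟨hxP, hxE⟩
      · exact Or.inr ⟨hxP, by rw [Set.mem_setOf_eq, hpure x ⟨hxP, hxE⟩]; exact hxf⟩
    calc 𝒟 (P ∩ {x | h x ≠ sm}) ≤ 𝒟 P := measure_mono Set.inter_subset_left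
      _ ≤ 2 * 𝒟 (P ∩ {x | f x ≠ c}) := key
      _ ≤ 2 * (𝒟 (P ∩ E) + 𝒟 (P ∩ {x | f x ≠ h x})) := mul_le_mul_right hsplit2 _
      _ = 2 * 𝒟 (P ∩ E) + 2 * 𝒟 (P ∩ {x | f x ≠ h x}) := mul_add _ _ _

end Batch5
section Batch6

/-- The good event: some ball of the carving contains the `ε`-ball of `x` and
all earlier balls miss it. -/
def goodEvent {d n : ℕ} (u : Fin n → Euc d) (ε R : ℝ) (σ : Equiv.Perm (Fin n))
    (x : Euc d) : Prop :=
  ∃ j, dist x (u j) + ε ≤ R ∧ ∀ j', σ j' < σ j → R + ε ≤ dist x (u j')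

lemma setEDist_le_edist {d : ℕ} {A B : Set (Euc d)} {a b : Euc d}
    (ha : a ∈ A) (hb : b ∈ B) : setEDist A B ≤ edist a b :=
  iInf₂_le_of_le a ha (iInf₂_le b hb)

lemma carvBlock_measurable {d n : ℕ} (u : Fin n → Euc d) (R : ℝ)
    (σ : Equiv.Perm (Fin n)) (i : Fin n) : MeasurableSet (carvBlock u R σ i) :=
  measurableSet_ball.diff (MeasurableSet.biUnion (Set.to_countable _)
    (fun _ _ => measurableSet_ball))

lemma carvBlock_disjoint {d n : ℕ} (u : Fin n → Euc d) (R : ℝ)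
    (σ : Equiv.Perm (Fin n)) {i i' : Fin n} (hne : i ≠ i') :
    Disjoint (carvBlock u R σ i) (carvBlock u R σ i') := by
  have hσ : σ i < σ i' ∨ σ i' < σ i :=
    lt_or_gt_of_ne (fun he => hne (σ.injective he))
  rw [Set.disjoint_left]
  rintro x ⟨hx1, hx1'⟩ ⟨hx2, hx2'⟩
  rcases hσ with hlt | hlt
  · exact hx2' (Set.mem_biUnion hlt hx1)
  · exact hx1' (Set.mem_biUnion hlt hx2)

lemma good_block {d n : ℕ} (u : Fin n → Euc d) {ε R : ℝ} (hε : 0 < ε)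
    (σ : Equiv.Perm (Fin n)) (x : Euc d) (hg : goodEvent u ε R σ x) :
    ∃ i, ball x ε ⊆ carvBlock u R σ i := by
  obtain ⟨j, h1, h2⟩ := hg
  refine ⟨j, fun y hy => ⟨?_, ?_⟩⟩
  · rw [mem_ball] at hy ⊢
    calc dist y (u j) ≤ dist y x + dist x (u j) := dist_triangle _ _ _
      _ < ε + (R - ε) := by rw [dist_comm y x] at hy ⊢; linarith [hy]
      _ = R := by ring
  · intro hmem
    obtain ⟨j', hj', hyj'⟩ := Set.mem_iUnion₂.mp hmem
    rw [mem_ball] at hyj'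
    have hxj' : dist x (u j') ≤ dist x y + dist y (u j') := dist_triangle _ _ _
    rw [mem_ball, dist_comm] at hy
    have := h2 j' hj'
    linarith

lemma det_bound {d n : ℕ} (𝒟 : Measure (Euc d)) [IsProbabilityMeasure 𝒟]
    {h f : Euc d → ℝ} (hh : IsClassifier h) (hf : IsClassifier f)
    {ε β R : ℝ} (hε : 0 < ε)
    (u : Fin n → Euc d) (σ : Equiv.Perm (Fin n))
    (g : Euc d → ℝ)
    (hgs : ∀ (x : Euc d) (i : Fin n), x ∈ carvBlock u R σ i →
      𝒟 (carvBlock u R σ i) ≠ 0 → g x = smoothVal 𝒟 f (carvBlock u R σ i))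
    (hR2 : 2 * R ≤ ε * β)
    (E : Set (Euc d)) (hE : MeasurableSet E)
    (hsepE : ENNReal.ofReal (ε * β) ≤ setEDist (h ⁻¹' {-1} \ E) (h ⁻¹' {1} \ E)) :
    advRisk 𝒟 h g ε ≤ 2 * 𝒟 E + 2 * risk 𝒟 h f +
      𝒟 {x | x ∈ msupport 𝒟 ∧ ¬ goodEvent u ε R σ x} := by
  classical
  -- pure label of each block
  have hpure : ∀ i : Fin n, ∃ c : ℝ, ∀ x ∈ carvBlock u R σ i \ E, h x = c := by
    intro i
    rcases Set.eq_empty_or_nonempty (carvBlock u R σ i \ E) with hemp | ⟨x₀, hx₀⟩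
    · exact ⟨1, fun x hx => absurd hx (by rw [hemp]; exact Set.notMem_empty x)⟩
    refine ⟨h x₀, fun x hx => ?_⟩
    by_contra hne
    have hdist : dist x x₀ < ε * β := by
      have d1 : dist x (u i) < R := hx.1.1
      have d2 : dist x₀ (u i) < R := hx₀.1.1
      calc dist x x₀ ≤ dist x (u i) + dist (u i) x₀ := dist_triangle _ _ _
        _ < R + R := by rw [dist_comm (u i) x₀]; linarith
        _ ≤ ε * β := by linarith
    have hcontra : ENNReal.ofReal (ε * β) ≤ ENNReal.ofReal (dist x x₀) := by
      rcases hh.2 x with hx1 | hx1 <;> rcases hh.2 x₀ with hx2 | hx2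
      · exact absurd (hx1.trans hx2.symm) hne
      · -- x ∈ M₊ \ E, x₀ ∈ M₋ \ E
        refine le_trans (le_trans hsepE (setEDist_le_edist (a := x₀) (b := x) ?_ ?_)) ?_
        · exact ⟨hx2, hx₀.2⟩
        · exact ⟨hx1, hx.2⟩
        · rw [edist_dist, dist_comm]
      · refine le_trans (le_trans hsepE (setEDist_le_edist (a := x) (b := x₀) ?_ ?_)) ?_
        · exact ⟨hx1, hx.2⟩
        · exact ⟨hx2, hx₀.2⟩
        · rw [edist_dist]
      · exact absurd (hx1.trans hx2.symm) hne
    have := (ENNReal.ofReal_le_ofReal_iff dist_nonneg).mp hcontra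
    linarith
  choose cl hcl using hpure
  -- the inclusion
  have hincl : {x | ∃ η : Euc d, ‖η‖ < ε ∧ g (x + η) ≠ h x} ⊆
      ((msupport 𝒟)ᶜ ∪ {x | x ∈ msupport 𝒟 ∧ ¬ goodEvent u ε R σ x}) ∪
        ⋃ i, carvBlock u R σ i ∩ {x | h x ≠ smoothVal 𝒟 f (carvBlock u R σ i)} := by
    intro x hx
    by_cases hsupp : x ∈ msupport 𝒟
    · by_cases hgood : goodEvent u ε R σ x
      · obtain ⟨i, hball⟩ := good_block u hε σ x hgood
        have hxblock : x ∈ carvBlock u R σ i := hball (mem_ball_self hε)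
        have hpos : 𝒟 (carvBlock u R σ i) ≠ 0 := by
          have := hsupp ε hε
          exact fun h0 => (lt_of_lt_of_le this (measure_mono hball)).ne' h0
        obtain ⟨η, hη, hgne⟩ := hx
        have hmem : x + η ∈ ball x ε := by
          rw [mem_ball, dist_eq_norm, add_sub_cancel_left]
          exact hη
        have hval : g (x + η) = smoothVal 𝒟 f (carvBlock u R σ i) :=
          hgs (x + η) i (hball hmem) hpos
        refine Or.inr (Set.mem_iUnion.mpr ⟨i, hxblock, ?_⟩)
        rw [Set.mem_setOf_eq]
        exact fun he => hgne (by rw [hval, ← he])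
      · exact Or.inl (Or.inr ⟨hsupp, hgood⟩)
    · exact Or.inl (Or.inl hsupp)
  -- measure bound
  calc advRisk 𝒟 h g ε ≤
      𝒟 (((msupport 𝒟)ᶜ ∪ {x | x ∈ msupport 𝒟 ∧ ¬ goodEvent u ε R σ x}) ∪
        ⋃ i, carvBlock u R σ i ∩ {x | h x ≠ smoothVal 𝒟 f (carvBlock u R σ i)}) :=
        measure_mono hincl
    _ ≤ (𝒟 ((msupport 𝒟)ᶜ) + 𝒟 {x | x ∈ msupport 𝒟 ∧ ¬ goodEvent u ε R σ x}) +
        𝒟 (⋃ i, carvBlock u R σ i ∩ {x | h x ≠ smoothVal 𝒟 f (carvBlock u R σ i)}) :=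
        le_trans (measure_union_le _ _) (add_le_add_left (measure_union_le _ _) _)
    _ = 𝒟 {x | x ∈ msupport 𝒟 ∧ ¬ goodEvent u ε R σ x} +
        𝒟 (⋃ i, carvBlock u R σ i ∩ {x | h x ≠ smoothVal 𝒟 f (carvBlock u R σ i)}) := by
        rw [measure_compl_msupport, zero_add]
    _ ≤ 𝒟 {x | x ∈ msupport 𝒟 ∧ ¬ goodEvent u ε R σ x} +
        (2 * 𝒟 E + 2 * risk 𝒟 h f) := ?_
    _ = 2 * 𝒟 E + 2 * risk 𝒟 h f +
        𝒟 {x | x ∈ msupport 𝒟 ∧ ¬ goodEvent u ε R σ x} := add_comm _ _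
  refine add_le_add_right ?_ _
  calc 𝒟 (⋃ i, carvBlock u R σ i ∩ {x | h x ≠ smoothVal 𝒟 f (carvBlock u R σ i)})
      ≤ ∑ i, 𝒟 (carvBlock u R σ i ∩ {x | h x ≠ smoothVal 𝒟 f (carvBlock u R σ i)}) :=
        measure_iUnion_fintype_le _ _
    _ ≤ ∑ i, (2 * 𝒟 (carvBlock u R σ i ∩ E) +
          2 * 𝒟 (carvBlock u R σ i ∩ {x | f x ≠ h x})) := by
        refine Finset.sum_le_sum fun i _ => ?_
        exact majority_bound 𝒟 hf hh _ E (carvBlock_measurable u R σ i) (hcl i)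
    _ = 2 * (∑ i, 𝒟 (carvBlock u R σ i ∩ E)) +
          2 * (∑ i, 𝒟 (carvBlock u R σ i ∩ {x | f x ≠ h x})) := by
        rw [Finset.sum_add_distrib, Finset.mul_sum, Finset.mul_sum]
    _ ≤ 2 * 𝒟 E + 2 * risk 𝒟 h f := by
        have key : ∀ (A : Set (Euc d)), MeasurableSet A →
            ∑ i, 𝒟 (carvBlock u R σ i ∩ A) ≤ 𝒟 A := by
          intro A hA
          have hdisj : ((Finset.univ : Finset (Fin n)) : Set (Fin n)).PairwiseDisjoint
              (fun i => carvBlock u R σ i ∩ A) := by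
            intro i _ i' _ hne
            exact Set.disjoint_of_subset Set.inter_subset_left Set.inter_subset_left
              (carvBlock_disjoint u R σ hne)
          rw [← measure_biUnion_finset hdisj
            (fun i _ => (carvBlock_measurable u R σ i).inter hA)]
          exact measure_mono (Set.iUnion₂_subset fun i _ => Set.inter_subset_right)
        have hfh : MeasurableSet {x | f x ≠ h x} := by
          have : {x | f x ≠ h x} = {x | (f - h) x ≠ 0} := by
            ext x; simp [sub_eq_zero]
          rw [this]
          exact ((hf.1.sub hh.1) (measurableSet_singleton 0)).compl
        rw [risk]
        exact add_le_add (mul_le_mul_right (key E hE) 2)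
          (mul_le_mul_right (key _ hfh) 2)

end Batch6
section Batch7

lemma measurableSet_top' {α : Type*} (s : Set α) :
    @MeasurableSet α ⊤ s := trivial

lemma measurableSet_of_sections {n : ℕ} (S : Set (ℝ × Equiv.Perm (Fin n)))
    (h : ∀ σ, MeasurableSet {R | (R, σ) ∈ S}) : MeasurableSet S := by
  have he : S = ⋃ σ : Equiv.Perm (Fin n), {R | (R, σ) ∈ S} ×ˢ {σ} := by
    ext ⟨R, σ⟩
    simp only [Set.mem_iUnion, Set.mem_prod, Set.mem_setOf_eq, Set.mem_singleton_iff]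
    constructor
    · intro hm; exact ⟨σ, hm, rfl⟩
    · rintro ⟨σ', hm, rfl⟩; exact hm
  rw [he]
  exact MeasurableSet.iUnion fun σ => (h σ).prod (measurableSet_top' _)

/-- rank of `j` in the lexicographic order on `(dj j, j)`. -/
def lexRank {n : ℕ} (dj : Fin n → ℝ) (j : Fin n) : ℕ :=
  (Finset.univ.filter (fun j' => dj j' < dj j ∨ (dj j' = dj j ∧ j' ≤ j))).card

lemma lexRank_pos {n : ℕ} (dj : Fin n → ℝ) (j : Fin n) : 1 ≤ lexRank dj j := by
  rw [lexRank]
  refine Finset.card_pos.mpr ⟨j, Finset.mem_filter.mpr ⟨Finset.mem_univ _, Or.inr ⟨rfl, le_refl _⟩⟩⟩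

lemma lexRank_strictMono {n : ℕ} (dj : Fin n → ℝ) {j j' : Fin n}
    (hlt : dj j < dj j' ∨ (dj j = dj j' ∧ j < j')) : lexRank dj j < lexRank dj j' := by
  apply Finset.card_lt_card
  rw [Finset.ssubset_iff_of_subset]
  · refine ⟨j', Finset.mem_filter.mpr ⟨Finset.mem_univ _, Or.inr ⟨rfl, le_refl _⟩⟩, ?_⟩
    intro hmem
    rcases Finset.mem_filter.mp hmem with ⟨_, hc | hc⟩
    · rcases hlt with hl | ⟨hl, _⟩
      · linarith
      · linarith [hl.le, hc]
    · rcases hlt with hl | ⟨_, hl⟩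
      · linarith [hc.1.symm.le]
      · exact absurd hc.2 (not_le.mpr hl)
  · intro k hk
    rcases Finset.mem_filter.mp hk with ⟨_, hc | hc⟩
    · refine Finset.mem_filter.mpr ⟨Finset.mem_univ _, ?_⟩
      rcases hlt with hl | ⟨hl, _⟩
      · exact Or.inl (by linarith)
      · exact Or.inl (by linarith)
    · refine Finset.mem_filter.mpr ⟨Finset.mem_univ _, ?_⟩
      rcases hlt with hl | ⟨hl, hl2⟩
      · exact Or.inl (by linarith [hc.1])
      · exact Or.inr ⟨by linarith [hc.1], le_trans hc.2 hl2.le⟩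

lemma lexRank_injOn {n : ℕ} (dj : Fin n → ℝ) {j j' : Fin n}
    (he : lexRank dj j = lexRank dj j') : j = j' := by
  by_contra hne
  rcases lt_trichotomy (dj j) (dj j') with hd | hd | hd
  · exact absurd he (ne_of_lt (lexRank_strictMono dj (Or.inl hd)))
  · rcases lt_or_gt_of_ne hne with hj | hj
    · exact absurd he (ne_of_lt (lexRank_strictMono dj (Or.inr ⟨hd, hj⟩)))
    · exact absurd he.symm (ne_of_lt (lexRank_strictMono dj (Or.inr ⟨hd.symm, hj⟩)))
  · exact absurd he.symm (ne_of_lt (lexRank_strictMono dj (Or.inl hd)))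

lemma lexRank_le_card_near {n : ℕ} (dj : Fin n → ℝ) (j : Fin n) {D : ℝ}
    (hj : dj j < D) :
    lexRank dj j ≤ (Finset.univ.filter (fun j' => dj j' < D)).card := by
  apply Finset.card_le_card
  intro k hk
  rcases Finset.mem_filter.mp hk with ⟨_, hc | hc⟩
  · exact Finset.mem_filter.mpr ⟨Finset.mem_univ _, by linarith⟩
  · exact Finset.mem_filter.mpr ⟨Finset.mem_univ _, by linarith [hc.1]⟩

end Batch7
section Batch8

lemma sum_inv_Icc_le_log (m : ℕ) :
    ∑ k ∈ Finset.Icc 1 m, (k : ℝ)⁻¹ ≤ 1 + Real.log m := by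
  have he : ∑ k ∈ Finset.Icc 1 m, (k : ℝ)⁻¹ = ((harmonic m : ℚ) : ℝ) := by
    rw [harmonic_eq_sum_Icc]
    push_cast
    rfl
  rw [he]
  exact harmonic_le_one_add_log m

lemma badprob_bound {d n : ℕ} {ε β : ℝ} (hε : 0 < ε) (hβ : 2 ≤ β)
    (u : Fin n → Euc d) (x : Euc d)
    (hx0 : ∃ i, dist x (u i) < ε * β / 4)
    {m : ℕ}
    (hnear : (Finset.univ.filter (fun j => dist x (u j) < ε * β)).card ≤ m) :
    carvMeasure (ε * β) n
      {p : ℝ × Equiv.Perm (Fin n) |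
        p.1 ∈ Set.Ioc (ε * β / 4) (ε * β / 2) ∧ ¬ goodEvent u ε p.1 p.2 x}
      ≤ ENNReal.ofReal (8 / β * (1 + Real.log m)) := by
  classical
  have hβ0 : 0 < β := by linarith
  have hεβ : 0 < ε * β := by positivity
  haveI : IsProbabilityMeasure (unifIoc (ε * β / 4) (ε * β / 2)) :=
    unifIoc_prob (by linarith)
  haveI : IsProbabilityMeasure (unifPerm n) := unifPerm_prob n
  set dj : Fin n → ℝ := fun j => dist x (u j) with hdj
  set Rel : Finset (Fin n) := Finset.univ.filter (fun j => dj j < ε * β / 2 + ε) with hRel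
  set A : Fin n → Set (ℝ × Equiv.Perm (Fin n)) := fun j =>
    {p | p.1 ∈ Set.Ioo (dj j - ε) (dj j + ε) ∧
      ∀ j', dj j' < p.1 + ε → j' ≠ j → p.2 j < p.2 j'} with hA
  -- covering by the events A j
  have hcover : {p : ℝ × Equiv.Perm (Fin n) |
      p.1 ∈ Set.Ioc (ε * β / 4) (ε * β / 2) ∧ ¬ goodEvent u ε p.1 p.2 x} ⊆
      ⋃ j ∈ Rel, A j := by
    rintro ⟨R, σ⟩ ⟨hR, hbad⟩
    set J : Finset (Fin n) := Finset.univ.filter (fun j => dj j < R + ε) with hJ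
    have hJne : J.Nonempty := by
      obtain ⟨i₀, hi₀⟩ := hx0
      refine ⟨i₀, Finset.mem_filter.mpr ⟨Finset.mem_univ _, ?_⟩⟩
      have h1 := hR.1
      simp only [hdj]
      linarith
    obtain ⟨j₀, hj₀J, hmin⟩ := Finset.exists_min_image J σ hJne
    have hj₀lt : dj j₀ < R + ε := (Finset.mem_filter.mp hj₀J).2
    have hj₀gt : R - ε < dj j₀ := by
      by_contra hle
      rw [not_lt] at hle
      refine hbad ⟨j₀, by linarith, fun j' hj' => ?_⟩
      by_contra hlt'
      rw [not_le] at hlt'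
      have hj'J : j' ∈ J := Finset.mem_filter.mpr ⟨Finset.mem_univ _, hlt'⟩
      exact absurd (hmin j' hj'J) (not_le.mpr hj')
    refine Set.mem_iUnion₂.mpr ⟨j₀, ?_, ⟨by linarith, by linarith⟩, ?_⟩
    · exact Finset.mem_filter.mpr ⟨Finset.mem_univ _, by linarith [hR.2]⟩
    · intro j' hj' hne
      have hj'J : j' ∈ J := Finset.mem_filter.mpr ⟨Finset.mem_univ _, hj'⟩
      exact lt_of_le_of_ne (hmin j' hj'J) (fun he => hne (σ.injective he.symm))
  -- measurability of A j
  have hAm : ∀ j, MeasurableSet (A j) := by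
    intro j
    refine measurableSet_of_sections _ (fun σ => ?_)
    have he : {R | (R, σ) ∈ A j} = Set.Ioo (dj j - ε) (dj j + ε) ∩
        ⋂ j', {R | dj j' < R + ε → j' ≠ j → σ j < σ j'} := by
      ext R
      simp only [hA, Set.mem_setOf_eq, Set.mem_inter_iff, Set.mem_iInter]
    rw [he]
    refine measurableSet_Ioo.inter (MeasurableSet.iInter fun j' => ?_)
    by_cases hc : j' ≠ j → σ j < σ j'
    · have hu : {R | dj j' < R + ε → j' ≠ j → σ j < σ j'} = Set.univ := by
        ext R; simp only [Set.mem_setOf_eq, Set.mem_univ, iff_true]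
        exact fun _ => hc
      rw [hu]; exact MeasurableSet.univ
    · have hu : {R | dj j' < R + ε → j' ≠ j → σ j < σ j'} = Set.Iic (dj j' - ε) := by
        ext R
        simp only [Set.mem_setOf_eq, Set.mem_Iic]
        constructor
        · intro hR
          by_contra hgt
          rw [not_le] at hgt
          exact hc (hR (by linarith))
        · intro hR hlt
          linarith
      rw [hu]; exact measurableSet_Iic
  -- pointwise bound for each A j
  have hmub : ∀ j ∈ Rel, carvMeasure (ε * β) n (A j) ≤
      (lexRank dj j : ℝ≥0∞)⁻¹ * ENNReal.ofReal (8 / β) := by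
    intro j _hj
    rw [carvMeasure, Measure.prod_apply (hAm j)]
    have hslice : ∀ R : ℝ, unifPerm n (Prod.mk R ⁻¹' A j) ≤
        (Set.Ioo (dj j - ε) (dj j + ε)).indicator
          (fun _ => (lexRank dj j : ℝ≥0∞)⁻¹) R := by
      intro R
      by_cases hR : R ∈ Set.Ioo (dj j - ε) (dj j + ε)
      · rw [Set.indicator_of_mem hR]
        set J : Finset (Fin n) := Finset.univ.filter (fun j' => dj j' < R + ε) with hJ
        have hjJ : j ∈ J := Finset.mem_filter.mpr ⟨Finset.mem_univ _, by
          have := hR.1; simp only [Set.mem_Ioo] at hR; linarith [hR.1]⟩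
        have hrank : lexRank dj j ≤ J.card := by
          apply Finset.card_le_card
          intro k hk
          simp only [Set.mem_Ioo] at hR
          rcases Finset.mem_filter.mp hk with ⟨_, hc | hc⟩
          · exact Finset.mem_filter.mpr ⟨Finset.mem_univ _, by linarith [hR.1]⟩
          · exact Finset.mem_filter.mpr ⟨Finset.mem_univ _, by linarith [hR.1, hc.1.le]⟩
        have hsets : (Prod.mk R ⁻¹' A j) ⊆ {σ' | ∀ k' ∈ J, k' ≠ j → σ' j < σ' k'} := by
          intro σ' hσ'
          intro k' hk' hne
          exact hσ'.2 k' (Finset.mem_filter.mp hk').2 hne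
        exact le_trans (measure_mono hsets) (unifPerm_min_le J hjJ hrank)
      · rw [Set.indicator_of_notMem hR]
        have hem : Prod.mk R ⁻¹' A j = ∅ := by
          ext σ
          simp only [Set.mem_preimage, Set.mem_empty_iff_false, iff_false]
          intro hmem
          exact hR hmem.1
        rw [hem, measure_empty]
    calc ∫⁻ R, unifPerm n (Prod.mk R ⁻¹' A j) ∂(unifIoc (ε*β/4) (ε*β/2))
        ≤ ∫⁻ R, (Set.Ioo (dj j - ε) (dj j + ε)).indicator
            (fun _ => (lexRank dj j : ℝ≥0∞)⁻¹) R ∂(unifIoc (ε*β/4) (ε*β/2)) :=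
          lintegral_mono hslice
      _ = (lexRank dj j : ℝ≥0∞)⁻¹ *
            unifIoc (ε*β/4) (ε*β/2) (Set.Ioo (dj j - ε) (dj j + ε)) := by
          rw [lintegral_indicator measurableSet_Ioo, setLIntegral_const]
      _ ≤ (lexRank dj j : ℝ≥0∞)⁻¹ * ENNReal.ofReal (8 / β) := by
          refine mul_le_mul_right ?_ _
          rw [unifIoc, Measure.smul_apply, smul_eq_mul,
            Measure.restrict_apply measurableSet_Ioo, Real.volume_Ioc]
          have h4 : ε * β / 2 - ε * β / 4 = ε * β / 4 := by ring
          rw [h4]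
          calc (ENNReal.ofReal (ε * β / 4))⁻¹ *
                volume (Set.Ioo (dj j - ε) (dj j + ε) ∩ Set.Ioc (ε*β/4) (ε*β/2))
              ≤ (ENNReal.ofReal (ε * β / 4))⁻¹ * volume (Set.Ioo (dj j - ε) (dj j + ε)) :=
                mul_le_mul_right (measure_mono Set.inter_subset_left) _
            _ = (ENNReal.ofReal (ε * β / 4))⁻¹ * ENNReal.ofReal (2 * ε) := by
                rw [Real.volume_Ioo]
                congr 1
                congr 1
                ring
            _ = ENNReal.ofReal (8 / β) := by
                rw [← ENNReal.ofReal_inv_of_pos (by positivity),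
                  ← ENNReal.ofReal_mul (by positivity)]
                congr 1
                field_simp
                ring
    -- sum over relevant j
  have hsum : (∑ j ∈ Rel, ((lexRank dj j : ℝ≥0∞))⁻¹) ≤ ENNReal.ofReal (1 + Real.log m) := by
    have hRelsub : ∀ j ∈ Rel, lexRank dj j ∈ Finset.Icc 1 m := by
      intro j hj
      rcases Finset.mem_filter.mp hj with ⟨_, hjlt⟩
      refine Finset.mem_Icc.mpr ⟨lexRank_pos dj j, le_trans (lexRank_le_card_near dj j ?_) hnear⟩
      have h2 : ε ≤ ε * β / 2 := by nlinarith
      simp only [hdj] at hjlt ⊢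
      linarith
    calc ∑ j ∈ Rel, ((lexRank dj j : ℝ≥0∞))⁻¹
        = ∑ k ∈ Rel.image (lexRank dj), (k : ℝ≥0∞)⁻¹ := by
          rw [Finset.sum_image (fun j _ j' _ he => lexRank_injOn dj he)]
      _ ≤ ∑ k ∈ Finset.Icc 1 m, (k : ℝ≥0∞)⁻¹ := by
          refine Finset.sum_le_sum_of_subset ?_
          intro k hk
          obtain ⟨j, hj, rfl⟩ := Finset.mem_image.mp hk
          exact hRelsub j hj
      _ = ENNReal.ofReal (∑ k ∈ Finset.Icc 1 m, (k:ℝ)⁻¹) := by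
          rw [ENNReal.ofReal_sum_of_nonneg (fun k _ => by positivity)]
          refine Finset.sum_congr rfl fun k hk => ?_
          have hk1 : 1 ≤ k := (Finset.mem_Icc.mp hk).1
          rw [ENNReal.ofReal_inv_of_pos (by exact_mod_cast hk1)]
          rw [ENNReal.ofReal_natCast]
      _ ≤ ENNReal.ofReal (1 + Real.log m) :=
          ENNReal.ofReal_le_ofReal (sum_inv_Icc_le_log m)
  have hlognn : 0 ≤ Real.log m := by
    rcases Nat.eq_zero_or_pos m with rfl | hm
    · simp
    · exact Real.log_nonneg (by exact_mod_cast hm)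
  calc carvMeasure (ε * β) n {p : ℝ × Equiv.Perm (Fin n) |
        p.1 ∈ Set.Ioc (ε * β / 4) (ε * β / 2) ∧ ¬ goodEvent u ε p.1 p.2 x}
      ≤ carvMeasure (ε * β) n (⋃ j ∈ Rel, A j) := measure_mono hcover
    _ ≤ ∑ j ∈ Rel, carvMeasure (ε * β) n (A j) := measure_biUnion_finset_le _ _
    _ ≤ ∑ j ∈ Rel, (lexRank dj j : ℝ≥0∞)⁻¹ * ENNReal.ofReal (8 / β) :=
        Finset.sum_le_sum hmub
    _ = (∑ j ∈ Rel, ((lexRank dj j : ℝ≥0∞))⁻¹) * ENNReal.ofReal (8 / β) := by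
        rw [← Finset.sum_mul]
    _ ≤ ENNReal.ofReal (1 + Real.log m) * ENNReal.ofReal (8 / β) :=
        mul_le_mul_left hsum _
    _ = ENNReal.ofReal (8 / β * (1 + Real.log m)) := by
        rw [← ENNReal.ofReal_mul (by linarith), mul_comm]

end Batch8
section Batch9

lemma goodEvent_measurable₂ {d n : ℕ} (u : Fin n → Euc d) (ε : ℝ)
    (σ : Equiv.Perm (Fin n)) :
    MeasurableSet {q : ℝ × Euc d | goodEvent u ε q.1 σ q.2} := by
  have he : {q : ℝ × Euc d | goodEvent u ε q.1 σ q.2} =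
      ⋃ j, ({q : ℝ × Euc d | dist q.2 (u j) + ε ≤ q.1} ∩
        ⋂ j', {q : ℝ × Euc d | σ j' < σ j → q.1 + ε ≤ dist q.2 (u j')}) := by
    ext q
    simp only [goodEvent, Set.mem_setOf_eq, Set.mem_iUnion, Set.mem_inter_iff,
      Set.mem_iInter]
  rw [he]
  refine MeasurableSet.iUnion fun j => ?_
  refine MeasurableSet.inter ?_ (MeasurableSet.iInter fun j' => ?_)
  · exact measurableSet_le
      (((continuous_snd.dist continuous_const).add continuous_const).measurable)
      measurable_fst
  · by_cases hc : σ j' < σ j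
    · have he2 : {q : ℝ × Euc d | σ j' < σ j → q.1 + ε ≤ dist q.2 (u j')} =
          {q : ℝ × Euc d | q.1 + ε ≤ dist q.2 (u j')} := by
        ext q; simp [hc]
      rw [he2]
      exact measurableSet_le ((continuous_fst.add continuous_const).measurable)
        ((continuous_snd.dist continuous_const).measurable)
    · have he2 : {q : ℝ × Euc d | σ j' < σ j → q.1 + ε ≤ dist q.2 (u j')} = Set.univ := by
        ext q; simp [hc]
      rw [he2]; exact MeasurableSet.univ

lemma T_measurable {d n : ℕ} (𝒟 : Measure (Euc d)) (u : Fin n → Euc d)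
    (ε a b : ℝ) :
    MeasurableSet {q : (ℝ × Equiv.Perm (Fin n)) × Euc d |
      q.2 ∈ msupport 𝒟 ∧ q.1.1 ∈ Set.Ioc a b ∧ ¬ goodEvent u ε q.1.1 q.1.2 q.2} := by
  have he : {q : (ℝ × Equiv.Perm (Fin n)) × Euc d |
      q.2 ∈ msupport 𝒟 ∧ q.1.1 ∈ Set.Ioc a b ∧ ¬ goodEvent u ε q.1.1 q.1.2 q.2} =
      ⋃ σ₀ : Equiv.Perm (Fin n), ({q : (ℝ × Equiv.Perm (Fin n)) × Euc d | q.1.2 = σ₀} ∩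
        ((fun q : (ℝ × Equiv.Perm (Fin n)) × Euc d => (q.1.1, q.2)) ⁻¹'
          ((Set.Ioc a b ×ˢ msupport 𝒟) ∩
            {p : ℝ × Euc d | goodEvent u ε p.1 σ₀ p.2}ᶜ))) := by
    ext ⟨⟨R, σ⟩, x⟩
    simp only [Set.mem_setOf_eq, Set.mem_iUnion, Set.mem_inter_iff, Set.mem_preimage,
      Set.mem_prod, Set.mem_compl_iff]
    constructor
    · rintro ⟨h1, h2, h3⟩; exact ⟨σ, rfl, ⟨h2, h1⟩, h3⟩
    · rintro ⟨σ', rfl, ⟨h2, h1⟩, h3⟩; exact ⟨h1, h2, h3⟩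
  rw [he]
  refine MeasurableSet.iUnion fun σ₀ => MeasurableSet.inter ?_ ?_
  · exact measurable_fst.snd (measurableSet_top' {σ₀})
  · refine Measurable.prodMk measurable_fst.fst measurable_snd ?_
    exact (measurableSet_Ioc.prod (isClosed_msupport 𝒟).measurableSet).inter
      (goodEvent_measurable₂ u ε σ₀).compl

lemma carv_outside_Ioc {n : ℕ} {ε : ℝ} (hε : 0 < ε) :
    carvMeasure ε n {p : ℝ × Equiv.Perm (Fin n) | p.1 ∉ Set.Ioc (ε/4) (ε/2)} = 0 := by
  haveI : IsProbabilityMeasure (unifIoc (ε/4) (ε/2)) := unifIoc_prob (by linarith)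
  haveI : IsProbabilityMeasure (unifPerm n) := unifPerm_prob n
  have he : {p : ℝ × Equiv.Perm (Fin n) | p.1 ∉ Set.Ioc (ε/4) (ε/2)} =
      (Set.Ioc (ε/4) (ε/2))ᶜ ×ˢ Set.univ := by
    ext ⟨R, σ⟩; simp
  rw [carvMeasure, he, Measure.prod_prod]
  have h0 : unifIoc (ε/4) (ε/2) (Set.Ioc (ε/4) (ε/2))ᶜ = 0 := by
    rw [unifIoc, Measure.smul_apply, smul_eq_mul,
      Measure.restrict_apply measurableSet_Ioc.compl]
    simp
  rw [h0, zero_mul]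

lemma expected_bad {d n : ℕ} (𝒟 : Measure (Euc d)) [IsProbabilityMeasure 𝒟]
    {ε β : ℝ} (hε : 0 < ε) (hβ : 2 ≤ β)
    (u : Fin n → Euc d)
    (hcov : msupport 𝒟 ⊆ ⋃ i, ball (u i) (ε * β / 4))
    {m : ℕ}
    (hnear : ∀ x ∈ msupport 𝒟,
      (Finset.univ.filter (fun j => dist x (u j) < ε * β)).card ≤ m) :
    ∫⁻ p, 𝒟 {x | x ∈ msupport 𝒟 ∧ ¬ goodEvent u ε p.1 p.2 x} ∂(carvMeasure (ε * β) n)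
      ≤ ENNReal.ofReal (8 / β * (1 + Real.log m)) := by
  classical
  have hβ0 : 0 < β := by linarith
  have hεβ : 0 < ε * β := by positivity
  haveI : IsProbabilityMeasure (unifIoc (ε * β / 4) (ε * β / 2)) :=
    unifIoc_prob (by linarith)
  haveI : IsProbabilityMeasure (unifPerm n) := unifPerm_prob n
  haveI : IsProbabilityMeasure (carvMeasure (ε * β) n) := by
    rw [carvMeasure]; infer_instance
  set T : Set ((ℝ × Equiv.Perm (Fin n)) × Euc d) :=
    {q | q.2 ∈ msupport 𝒟 ∧ q.1.1 ∈ Set.Ioc (ε * β / 4) (ε * β / 2) ∧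
      ¬ goodEvent u ε q.1.1 q.1.2 q.2} with hT
  have hTm : MeasurableSet T := T_measurable 𝒟 u ε _ _
  have step1 : ∫⁻ p, 𝒟 {x | x ∈ msupport 𝒟 ∧ ¬ goodEvent u ε p.1 p.2 x}
        ∂(carvMeasure (ε * β) n)
      = ∫⁻ p, 𝒟 (Prod.mk p ⁻¹' T) ∂(carvMeasure (ε * β) n) := by
    refine lintegral_congr_ae ?_
    have hae : ∀ᵐ p ∂(carvMeasure (ε * β) n), p.1 ∈ Set.Ioc (ε * β / 4) (ε * β / 2) := by
      rw [MeasureTheory.ae_iff]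
      exact carv_outside_Ioc hεβ
    filter_upwards [hae] with p hp
    congr 1
    ext x
    simp only [Set.mem_setOf_eq, Set.mem_preimage, hT]
    tauto
  have step2 : ∫⁻ p, 𝒟 (Prod.mk p ⁻¹' T) ∂(carvMeasure (ε * β) n)
      = ((carvMeasure (ε * β) n).prod 𝒟) T := (Measure.prod_apply hTm).symm
  have step3 : ((carvMeasure (ε * β) n).prod 𝒟) T
      = ∫⁻ x, carvMeasure (ε * β) n ((fun p => (p, x)) ⁻¹' T) ∂𝒟 :=
    Measure.prod_apply_symm hTm
  rw [step1, step2, step3]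
  have hbound : ∀ x : Euc d, carvMeasure (ε * β) n ((fun p => (p, x)) ⁻¹' T)
      ≤ ENNReal.ofReal (8 / β * (1 + Real.log m)) := by
    intro x
    by_cases hx : x ∈ msupport 𝒟
    · have hsub : ((fun p : ℝ × Equiv.Perm (Fin n) => (p, x)) ⁻¹' T) ⊆
          {p : ℝ × Equiv.Perm (Fin n) |
            p.1 ∈ Set.Ioc (ε * β / 4) (ε * β / 2) ∧ ¬ goodEvent u ε p.1 p.2 x} := by
        intro p hp
        exact ⟨hp.2.1, hp.2.2⟩
      refine le_trans (measure_mono hsub) ?_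
      refine badprob_bound hε hβ u x ?_ (hnear x hx)
      obtain ⟨i, hi⟩ := Set.mem_iUnion.mp (hcov hx)
      exact ⟨i, hi⟩
    · have hem : ((fun p : ℝ × Equiv.Perm (Fin n) => (p, x)) ⁻¹' T) = ∅ := by
        ext p
        simp only [Set.mem_preimage, Set.mem_empty_iff_false, iff_false]
        exact fun hp => hx hp.1
      rw [hem, measure_empty]
      exact zero_le
  calc ∫⁻ x, carvMeasure (ε * β) n ((fun p => (p, x)) ⁻¹' T) ∂𝒟
      ≤ ∫⁻ _x, ENNReal.ofReal (8 / β * (1 + Real.log m)) ∂𝒟 := lintegral_mono hbound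
    _ = ENNReal.ofReal (8 / β * (1 + Real.log m)) := by
        rw [lintegral_const, measure_univ, mul_one]

end Batch9

/-- Theorem 3 (low-dimensional support, doubling-dimension form): there is a
universal constant `C > 0` such that the following holds.  Let `(𝒟, h)` be a
separable binary classification task on `ℝ^d` with `supp(𝒟)` bounded, `f` a
measurable classifier, `ε > 0`, `β > 1`, and suppose the `εβ`-doubling
dimension of `supp(𝒟)` (with the inherited `ℓ₂` metric) is at most `d'`.  Let
`g_{R,σ}` be the smoothed classifier obtained from the ball carving partition
of `supp(𝒟)` with parameter `εβ`.  Then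
`𝔼_{R,σ}[AR(g, ε)] ≤ 2·S(εβ) + 2·R(f) + C·(d'+1)/β`, and moreover, if
`AR(ε) > 0`, then
`𝔼_{R,σ}[AR(g, ε)] ≤ (2·S(εβ)/S(2ε))·AR(ε) + 2·R(f) + C·(d'+1)/β`. -/
theorem stmt15 : ∃ C : ℝ, 0 < C ∧
    ∀ (d n : ℕ) (𝒟 : Measure (Euc d)), IsProbabilityMeasure 𝒟 →
    Bornology.IsBounded (msupport 𝒟) →
    ∀ h : Euc d → ℝ, IsClassifier h →
    ∀ f : Euc d → ℝ, IsClassifier f →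
    ∀ (ε β : ℝ), 0 < ε → 1 < β →
    -- the `εβ`-doubling dimension of `supp(𝒟)` is at most `d'`
    ∀ d' : ℝ, ddim (msupport 𝒟) (ε * β) ≤ d' →
    -- `u` is a finite `εβ/4`-net of `supp(𝒟)`
    ∀ u : Fin n → Euc d, (∀ i, u i ∈ msupport 𝒟) →
    (∀ i j, i ≠ j → ε * β / 4 ≤ dist (u i) (u j)) →
    msupport 𝒟 ⊆ (⋃ i, ball (u i) (ε * β / 4)) →
    -- the smoothed classifiers
    ∀ g : ℝ → Equiv.Perm (Fin n) → Euc d → ℝ,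
    (∀ R σ, IsClassifier (g R σ)) →
    (∀ (R : ℝ) (σ : Equiv.Perm (Fin n)) (x : Euc d) (i : Fin n),
      x ∈ carvBlock u R σ i → 𝒟 (carvBlock u R σ i) ≠ 0 →
      g R σ x = smoothVal 𝒟 f (carvBlock u R σ i)) →
    ((∫⁻ p, advRisk 𝒟 h (g p.1 p.2) ε ∂(carvMeasure (ε * β) n)) ≤
        2 * sep 𝒟 h (ε * β) + 2 * risk 𝒟 h f +
          ENNReal.ofReal (C * (d' + 1) / β) ∧
      (0 < optAdvRisk 𝒟 h ε →
        (∫⁻ p, advRisk 𝒟 h (g p.1 p.2) ε ∂(carvMeasure (ε * β) n)) ≤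
          2 * sep 𝒟 h (ε * β) / sep 𝒟 h (2 * ε) * optAdvRisk 𝒟 h ε +
            2 * risk 𝒟 h f + ENNReal.ofReal (C * (d' + 1) / β))) := by
  classical
  refine ⟨32, by norm_num, ?_⟩
  intro d n 𝒟 hprob hbdd h hh f hf ε β hε hβ d' hd' u humem husep hucov g hgcl hpin
  haveI := hprob
  have hβ0 : 0 < β := by linarith
  have hεβ : 0 < ε * β := by positivity
  haveI : IsProbabilityMeasure (unifIoc (ε * β / 4) (ε * β / 2)) :=
    unifIoc_prob (by linarith)
  haveI : IsProbabilityMeasure (unifPerm n) := unifPerm_prob n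
  haveI hcarvprob : IsProbabilityMeasure (carvMeasure (ε * β) n) := by
    rw [carvMeasure]; infer_instance
  -- d' is nonnegative
  have hdd0 : 0 ≤ ddim (msupport 𝒟) (ε * β) := by
    rw [ddim]
    rcases Nat.eq_zero_or_pos (doublingConstant (msupport 𝒟) (ε * β)) with h0 | hpos
    · rw [h0]; simp [Real.logb]
    · exact Real.logb_nonneg (by norm_num) (by exact_mod_cast hpos)
  have hd'0 : 0 ≤ d' := le_trans hdd0 hd'
  -- the main (first) inequality
  have hmain : (∫⁻ p, advRisk 𝒟 h (g p.1 p.2) ε ∂(carvMeasure (ε * β) n)) ≤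
      2 * sep 𝒟 h (ε * β) + 2 * risk 𝒟 h f +
        ENNReal.ofReal (32 * (d' + 1) / β) := by
    rcases le_or_gt 2 β with hβ2 | hβ2
    · -- the interesting case: β ≥ 2
      -- the doubling constant
      set lam : ℕ := doublingConstant (msupport 𝒟) (ε * β) with hlam
      obtain ⟨l₀, hl₀⟩ := euclidean_doubling d (msupport 𝒟)
      have hlmem : lam ∈ {l : ℕ | ∀ (x : ↥(msupport 𝒟)) (r : ℝ), 0 < r → r ≤ ε * β →
          ∃ T : Finset ↥(msupport 𝒟), T.card ≤ l ∧ ball x r ⊆ ⋃ y ∈ T, ball y (r / 2)} := by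
        rw [hlam, doublingConstant]
        exact Nat.sInf_mem ⟨l₀, fun x r hr _ => hl₀ x r hr⟩
      have hlprop : ∀ (x : ↥(msupport 𝒟)) (r : ℝ), 0 < r → r ≤ ε * β →
          ∃ T : Finset ↥(msupport 𝒟), T.card ≤ lam ∧
            ball x r ⊆ ⋃ y ∈ T, ball y (r / 2) := hlmem
      -- near points bound
      have hnear : ∀ x ∈ msupport 𝒟,
          (Finset.univ.filter (fun j => dist x (u j) < ε * β)).card ≤ lam ^ 4 := by
        intro x hx
        set F : Finset (Fin n) := Finset.univ.filter (fun j => dist x (u j) < ε * β) with hF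
        set s : Finset ↥(msupport 𝒟) :=
          F.image (fun j => (⟨u j, humem j⟩ : ↥(msupport 𝒟))) with hs
        have hinj : Set.InjOn (fun j => (⟨u j, humem j⟩ : ↥(msupport 𝒟))) ↑F := by
          intro i _ j _ he
          by_contra hne
          have hdist := husep i j hne
          have huv : u i = u j := congrArg Subtype.val he
          rw [huv, dist_self] at hdist
          nlinarith
        have hcard : F.card = s.card := (Finset.card_image_of_injOn hinj).symm
        rw [hcard]
        refine packing_card hεβ hlprop ⟨x, hx⟩ s ?_ ?_
        · intro a ha b hb hne
          obtain ⟨i, hi, rfl⟩ := Finset.mem_image.mp ha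
          obtain ⟨j, hj, rfl⟩ := Finset.mem_image.mp hb
          have hij : i ≠ j := fun he => hne (by rw [he])
          rw [Subtype.dist_eq]
          exact husep i j hij
        · intro a ha
          obtain ⟨j, hj, rfl⟩ := Finset.mem_image.mp ha
          rw [mem_ball, Subtype.dist_eq]
          have := (Finset.mem_filter.mp hj).2
          rw [dist_comm]
          exact this
      -- logarithmic bound
      have hlog : 1 + Real.log ((lam ^ 4 : ℕ) : ℝ) ≤ 4 * (d' + 1) := by
        rcases Nat.eq_zero_or_pos lam with h0 | hpos
        · rw [h0]; norm_num; linarith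
        · have hcast : ((lam ^ 4 : ℕ) : ℝ) = (lam : ℝ) ^ 4 := by push_cast; ring
          rw [hcast, Real.log_pow]
          have hlogb : Real.logb 2 (lam : ℝ) ≤ d' := by
            rw [ddim] at hd'; exact hd'
          have hlogb0 : 0 ≤ Real.logb 2 (lam : ℝ) :=
            Real.logb_nonneg one_lt_two (by exact_mod_cast hpos)
          have hlog2e : Real.log (lam : ℝ) = Real.logb 2 (lam : ℝ) * Real.log 2 := by
            rw [Real.logb]
            field_simp
          have hl2 : Real.log 2 ≤ 1 := by
            linarith [Real.log_le_sub_one_of_pos (by norm_num : (0:ℝ) < 2)]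
          have hl20 : (0:ℝ) ≤ Real.log 2 := Real.log_nonneg one_le_two
          have : Real.log (lam : ℝ) ≤ d' := by
            rw [hlog2e]
            nlinarith
          push_cast
          linarith
      have hKb : ENNReal.ofReal (8 / β * (1 + Real.log ((lam ^ 4 : ℕ) : ℝ))) ≤
          ENNReal.ofReal (32 * (d' + 1) / β) := by
        refine ENNReal.ofReal_le_ofReal ?_
        have he8 : 8 / β * (1 + Real.log ((lam ^ 4 : ℕ) : ℝ))
            = 8 * (1 + Real.log ((lam ^ 4 : ℕ) : ℝ)) / β := by ring
        rw [he8, div_le_div_iff₀ hβ0 hβ0]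
        have hlognn : 0 ≤ 1 + Real.log ((lam ^ 4 : ℕ) : ℝ) := by
          rcases Nat.eq_zero_or_pos (lam ^ 4) with h0 | hpos
          · rw [h0]; norm_num
          · have : (0:ℝ) ≤ Real.log ((lam ^ 4 : ℕ) : ℝ) :=
              Real.log_nonneg (by exact_mod_cast hpos)
            linarith
        nlinarith
      -- per-E bound
      have hperE : ∀ E : Set (Euc d), MeasurableSet E →
          ENNReal.ofReal (ε * β) ≤ setEDist (h ⁻¹' {-1} \ E) (h ⁻¹' {1} \ E) →
          (∫⁻ p, advRisk 𝒟 h (g p.1 p.2) ε ∂(carvMeasure (ε * β) n)) ≤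
            2 * 𝒟 E + 2 * risk 𝒟 h f + ENNReal.ofReal (32 * (d' + 1) / β) := by
        intro E hEm hEsep
        have hstep : (∫⁻ p, advRisk 𝒟 h (g p.1 p.2) ε ∂(carvMeasure (ε * β) n)) ≤
            ∫⁻ p, (2 * 𝒟 E + 2 * risk 𝒟 h f +
              𝒟 {x | x ∈ msupport 𝒟 ∧ ¬ goodEvent u ε p.1 p.2 x})
              ∂(carvMeasure (ε * β) n) := by
          refine lintegral_mono_ae ?_
          have hae : ∀ᵐ p ∂(carvMeasure (ε * β) n),
              p.1 ∈ Set.Ioc (ε * β / 4) (ε * β / 2) := by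
            rw [MeasureTheory.ae_iff]
            exact carv_outside_Ioc hεβ
          filter_upwards [hae] with p hp
          exact det_bound 𝒟 hh hf hε u p.2 (g p.1 p.2) (fun x i => hpin p.1 p.2 x i)
            (by linarith [hp.2] : 2 * p.1 ≤ ε * β) E hEm hEsep
        refine le_trans hstep ?_
        rw [lintegral_add_left measurable_const, lintegral_const, measure_univ, mul_one]
        exact add_le_add_right (le_trans (expected_bad 𝒟 hε hβ2 u hucov hnear) hKb) _
      -- take the infimum over E
      refine ENNReal.le_of_forall_pos_le_add fun δ hδ _hfin => ?_
      have hsepne : sep 𝒟 h (ε * β) ≠ ⊤ := by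
        refine (lt_of_le_of_lt (sep_le_univ 𝒟 h (ε * β)) ?_).ne
        rw [measure_univ]
        exact ENNReal.one_lt_top
      have hδ2 : ((δ : ℝ≥0∞) / 2) ≠ 0 := by
        simp [ENNReal.div_eq_zero_iff, hδ.ne']
      have hsep_lt : sep 𝒟 h (ε * β) < sep 𝒟 h (ε * β) + (δ : ℝ≥0∞) / 2 :=
        ENNReal.lt_add_right hsepne hδ2
      rw [sep] at hsep_lt
      rw [show (⨅ (E : Set (Euc d)) (_ : MeasurableSet E)
        (_ : ENNReal.ofReal (ε * β) ≤
          setEDist (h ⁻¹' {-1} \ E) (h ⁻¹' {1} \ E)), 𝒟 E) = sep 𝒟 h (ε * β) from rfl]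
        at hsep_lt
      conv_lhs at hsep_lt => rw [sep]
      obtain ⟨E, hE1⟩ := iInf_lt_iff.mp hsep_lt
      obtain ⟨hEm, hE2⟩ := iInf_lt_iff.mp hE1
      obtain ⟨hEsep, hE3⟩ := iInf_lt_iff.mp hE2
      calc (∫⁻ p, advRisk 𝒟 h (g p.1 p.2) ε ∂(carvMeasure (ε * β) n))
          ≤ 2 * 𝒟 E + 2 * risk 𝒟 h f + ENNReal.ofReal (32 * (d' + 1) / β) :=
            hperE E hEm hEsep
        _ ≤ 2 * (sep 𝒟 h (ε * β) + (δ : ℝ≥0∞) / 2) + 2 * risk 𝒟 h f +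
              ENNReal.ofReal (32 * (d' + 1) / β) := by
            gcongr
            try exact hE3.le
        _ = 2 * sep 𝒟 h (ε * β) + 2 * risk 𝒟 h f +
              ENNReal.ofReal (32 * (d' + 1) / β) + δ := by
            rw [mul_add, ENNReal.mul_div_cancel two_ne_zero ENNReal.ofNat_ne_top]
            ring
    · -- trivial case: β < 2
      have hK1 : 1 ≤ ENNReal.ofReal (32 * (d' + 1) / β) := by
        rw [ENNReal.one_le_ofReal]
        rw [le_div_iff₀ hβ0]
        nlinarith
      have hLHS1 : (∫⁻ p, advRisk 𝒟 h (g p.1 p.2) ε ∂(carvMeasure (ε * β) n)) ≤ 1 := by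
        calc (∫⁻ p, advRisk 𝒟 h (g p.1 p.2) ε ∂(carvMeasure (ε * β) n))
            ≤ ∫⁻ _p, 1 ∂(carvMeasure (ε * β) n) := by
              refine lintegral_mono fun p => ?_
              rw [advRisk]
              exact le_trans (measure_mono (Set.subset_univ _)) (le_of_eq measure_univ)
          _ = 1 := by rw [lintegral_one, measure_univ]
      exact hLHS1.trans (le_trans hK1 le_add_self)
  refine ⟨hmain, fun hAR => ?_⟩
  have hs_le : sep 𝒟 h (2 * ε) ≤ optAdvRisk 𝒟 h ε := by
    rw [optAdvRisk]
    exact le_iInf fun f' => le_iInf fun hf' => sep_le_advRisk 𝒟 h f' hf' hh hε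
  have hsne : sep 𝒟 h (2 * ε) ≠ ⊤ := by
    refine (lt_of_le_of_lt (sep_le_univ 𝒟 h (2 * ε)) ?_).ne
    rw [measure_univ]
    exact ENNReal.one_lt_top
  have h2 : 2 * sep 𝒟 h (ε * β) ≤
      2 * sep 𝒟 h (ε * β) / sep 𝒟 h (2 * ε) * optAdvRisk 𝒟 h ε :=
    le_div_mul_of_le _ _ _ hs_le hAR hsne
  exact hmain.trans (add_le_add_left (add_le_add_left h2 _) _)
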